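/- Let w ∈ W_K and let s ∈ S₂(K) be such that s(V_i) = w(V_i) for i = 1,2,3,4 and such that s and w have equal integrals over each of the four edges of K, i.e. ∫₀ᵃ s(x,0) dx = ∫₀ᵃ w(x,0) dx, ∫₀ᵃ s(x,b) dx = ∫₀ᵃ w(x,b) dx, ∫₀ᵇ s(a,y) dy = ∫₀ᵇ w(a,y) dy, and ∫₀ᵇ s(0,y) dy = ∫₀ᵇ w(0,y) dy. Then the restrictions of w − s to the two vertical edges coincide: (w − s)(a, y) = (w − s)(0, y) for every y ∈ [0,b]. -/

import Mathlib

open MvPolynomial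

/-- Membership in the shape function space `W_K = P₃ ⊕ span{x⁴, y⁴}`. -/
def memWK (w : MvPolynomial (Fin 2) ℝ) : Prop :=
  ∃ (p : MvPolynomial (Fin 2) ℝ) (c d : ℝ),
    p.totalDegree ≤ 3 ∧ w = p + C c * X 0 ^ 4 + C d * X 1 ^ 4

/-- Membership in the second-order serendipity space
`S₂(K) = P₂ ⊕ span{x²y, xy²}`. -/
def memS2 (s : MvPolynomial (Fin 2) ℝ) : Prop :=
  ∃ (p : MvPolynomial (Fin 2) ℝ) (c d : ℝ),
    p.totalDegree ≤ 2 ∧ s = p + C c * X 0 ^ 2 * X 1 + C d * X 0 * X 1 ^ 2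

lemma msum (m : Fin 2 →₀ ℕ) : (∑ i ∈ m.support, m i) = m 0 + m 1 := by
  rw [Finset.sum_subset (Finset.subset_univ _) (fun i _ hi => Finsupp.notMem_support_iff.mp hi),
    Fin.sum_univ_two]

lemma coeff_lowdeg (p : MvPolynomial (Fin 2) ℝ) (hp : p.totalDegree ≤ 3)
    (m : Fin 2 →₀ ℕ) (h0 : 1 ≤ m 0) (h1 : 3 ≤ m 1) : coeff m p = 0 := by
  apply coeff_eq_zero_of_totalDegree_lt
  rw [msum]; omega

lemma coeff_x4 (m : Fin 2 →₀ ℕ) (h1 : 3 ≤ m 1) :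
    coeff m (X (0:Fin 2) ^ 4 : MvPolynomial (Fin 2) ℝ) = 0 := by
  rw [coeff_X_pow, if_neg]
  intro h
  have : (Finsupp.single (0:Fin 2) 4) 1 = m 1 := DFunLike.congr_fun h 1
  simp at this; omega

lemma coeff_y4 (m : Fin 2 →₀ ℕ) (h0 : 1 ≤ m 0) :
    coeff m (X (1:Fin 2) ^ 4 : MvPolynomial (Fin 2) ℝ) = 0 := by
  rw [coeff_X_pow, if_neg]
  intro h
  have : (Finsupp.single (1:Fin 2) 4) 0 = m 0 := DFunLike.congr_fun h 0
  simp at this; omega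

lemma coeff_x2y (m : Fin 2 →₀ ℕ) (h1 : 3 ≤ m 1) :
    coeff m (X (0:Fin 2) ^ 2 * X 1 : MvPolynomial (Fin 2) ℝ) = 0 := by
  rw [X_pow_eq_monomial, X, monomial_mul, one_mul, coeff_monomial, if_neg]
  intro h
  have : ((Finsupp.single (0:Fin 2) 2 + Finsupp.single 1 1 : Fin 2 →₀ ℕ)) 1 = m 1 :=
    DFunLike.congr_fun h 1
  simp at this; omega

lemma coeff_xy2 (m : Fin 2 →₀ ℕ) (h1 : 3 ≤ m 1) :
    coeff m (X (0:Fin 2) * X 1 ^ 2 : MvPolynomial (Fin 2) ℝ) = 0 := by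
  rw [X_pow_eq_monomial, X, monomial_mul, one_mul, coeff_monomial, if_neg]
  intro h
  have : ((Finsupp.single (0:Fin 2) 1 + Finsupp.single 1 2 : Fin 2 →₀ ℕ)) 1 = m 1 :=
    DFunLike.congr_fun h 1
  simp at this; omega

/-- The difference of the restrictions of `q` to two vertical edges is a quadratic
in `y`, provided all coefficients of monomials `x^i y^k` with `i ≥ 1`, `k ≥ 3` vanish. -/
lemma quad_rep (a : ℝ) (q : MvPolynomial (Fin 2) ℝ)
    (hq : ∀ m : Fin 2 →₀ ℕ, 1 ≤ m 0 → 3 ≤ m 1 → coeff m q = 0) :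
    ∃ c0 c1 c2 : ℝ, ∀ y : ℝ,
      eval ![a, y] q - eval ![(0:ℝ), y] q = c0 + c1 * y + c2 * y ^ 2 := by
  refine ⟨∑ d ∈ q.support, (if d 1 = 0 then coeff d q * (a ^ d 0 - 0 ^ d 0) else 0),
    ∑ d ∈ q.support, (if d 1 = 1 then coeff d q * (a ^ d 0 - 0 ^ d 0) else 0),
    ∑ d ∈ q.support, (if d 1 = 2 then coeff d q * (a ^ d 0 - 0 ^ d 0) else 0),
    fun y => ?_⟩
  rw [eval_eq', eval_eq']
  simp only [Fin.prod_univ_two, Matrix.cons_val_zero, Matrix.cons_val_one, Matrix.head_cons]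
  rw [← Finset.sum_sub_distrib, Finset.sum_mul, Finset.sum_mul, ← Finset.sum_add_distrib,
    ← Finset.sum_add_distrib]
  refine Finset.sum_congr rfl fun d hd => ?_
  rcases Nat.lt_or_ge (d 1) 3 with h | h
  · have h3 : d 1 = 0 ∨ d 1 = 1 ∨ d 1 = 2 := by omega
    rcases h3 with h3 | h3 | h3 <;> rw [h3] <;> norm_num <;> ring
  · rcases Nat.eq_zero_or_pos (d 0) with h0 | h0
    · rw [h0, if_neg (by omega), if_neg (by omega), if_neg (by omega)]
      norm_num
    · rw [hq d h0 h, if_neg (by omega), if_neg (by omega), if_neg (by omega)]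
      norm_num

lemma cont_edge (x0 : ℝ) (q : MvPolynomial (Fin 2) ℝ) :
    Continuous fun y : ℝ => eval ![x0, y] q :=
  (MvPolynomial.continuous_eval q).comp
    (continuous_pi fun i => by
      fin_cases i
      · simpa using continuous_const
      · simpa using continuous_id')

lemma quad_integral (b c0 c1 c2 : ℝ) :
    (∫ y in (0:ℝ)..b, (c0 + c1 * y + c2 * y ^ 2)) =
      c0 * b + c1 * (b ^ 2 / 2) + c2 * (b ^ 3 / 3) := by
  rw [intervalIntegral.integral_add, intervalIntegral.integral_add,
    intervalIntegral.integral_const, intervalIntegral.integral_const_mul,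
    intervalIntegral.integral_const_mul, integral_id, integral_pow]
  · norm_num; ring
  · exact intervalIntegrable_const
  · exact (continuous_const.mul continuous_id).intervalIntegrable _ _
  · exact (intervalIntegrable_const.add
      ((continuous_const.mul continuous_id).intervalIntegrable _ _))
  · exact (continuous_const.mul (continuous_pow 2)).intervalIntegrable _ _

/-- if `s ∈ S₂(K)` interpolates `w ∈ W_K` at the vertices and
has the same edge integrals, then the restrictions of `w − s` to the two
vertical edges of `K = [0,a] × [0,b]` coincide. -/
theorem stmt10 (a b : ℝ) (ha : 0 < a) (hb : 0 < b)
    (w s : MvPolynomial (Fin 2) ℝ) (hw : memWK w) (hs : memS2 s)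
    (hV1 : eval ![(0:ℝ), 0] s = eval ![(0:ℝ), 0] w)
    (hV2 : eval ![a, 0] s = eval ![a, 0] w)
    (hV3 : eval ![a, b] s = eval ![a, b] w)
    (hV4 : eval ![(0:ℝ), b] s = eval ![(0:ℝ), b] w)
    (hE1 : (∫ x in (0:ℝ)..a, eval ![x, 0] s) = ∫ x in (0:ℝ)..a, eval ![x, 0] w)
    (hE3 : (∫ x in (0:ℝ)..a, eval ![x, b] s) = ∫ x in (0:ℝ)..a, eval ![x, b] w)
    (hE2 : (∫ y in (0:ℝ)..b, eval ![a, y] s) = ∫ y in (0:ℝ)..b, eval ![a, y] w)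
    (hE4 : (∫ y in (0:ℝ)..b, eval ![(0:ℝ), y] s) =
      ∫ y in (0:ℝ)..b, eval ![(0:ℝ), y] w) :
    ∀ y ∈ Set.Icc (0:ℝ) b, eval ![a, y] (w - s) = eval ![(0:ℝ), y] (w - s) := by
  have hq : ∀ m : Fin 2 →₀ ℕ, 1 ≤ m 0 → 3 ≤ m 1 → coeff m (w - s) = 0 := by
    intro m h0 h1
    obtain ⟨p, c, d, hp, hwd⟩ := hw
    obtain ⟨p2, c2, d2, hp2, hsd⟩ := hs
    rw [hwd, hsd]
    simp only [mul_assoc, coeff_sub, coeff_add, coeff_C_mul]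
    rw [coeff_lowdeg p hp m h0 h1, coeff_lowdeg p2 (hp2.trans (by norm_num)) m h0 h1,
      coeff_x4 m h1, coeff_y4 m h0, coeff_x2y m h1, coeff_xy2 m h1]
    ring
  obtain ⟨c0, c1, c2, hrep⟩ := quad_rep a (w - s) hq
  have heval : ∀ (x0 y : ℝ), eval ![x0, y] (w - s) = eval ![x0, y] w - eval ![x0, y] s :=
    fun x0 y => map_sub _ _ _
  have h00 : c0 = 0 := by
    have := hrep 0
    rw [heval, heval, hV1, hV2] at this
    nlinarith [this]
  have hbb : c0 + c1 * b + c2 * b ^ 2 = 0 := by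
    have := hrep b
    rw [heval, heval, hV3, hV4] at this
    nlinarith [this]
  have hint : c0 * b + c1 * (b ^ 2 / 2) + c2 * (b ^ 3 / 3) = 0 := by
    rw [← quad_integral b c0 c1 c2]
    have Iaw : IntervalIntegrable (fun y : ℝ => eval ![a, y] w)
        MeasureTheory.volume 0 b := (cont_edge a w).intervalIntegrable _ _
    have Ias : IntervalIntegrable (fun y : ℝ => eval ![a, y] s)
        MeasureTheory.volume 0 b := (cont_edge a s).intervalIntegrable _ _
    have I0w : IntervalIntegrable (fun y : ℝ => eval ![(0:ℝ), y] w)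
        MeasureTheory.volume 0 b := (cont_edge 0 w).intervalIntegrable _ _
    have I0s : IntervalIntegrable (fun y : ℝ => eval ![(0:ℝ), y] s)
        MeasureTheory.volume 0 b := (cont_edge 0 s).intervalIntegrable _ _
    have hcongr : (∫ y in (0:ℝ)..b, (c0 + c1 * y + c2 * y ^ 2)) =
        ∫ y in (0:ℝ)..b,
          ((eval ![a, y] w - eval ![a, y] s) - (eval ![(0:ℝ), y] w - eval ![(0:ℝ), y] s)) := by
      apply intervalIntegral.integral_congr
      intro y _
      show c0 + c1 * y + c2 * y ^ 2 =
        (eval ![a, y] w - eval ![a, y] s) - (eval ![(0:ℝ), y] w - eval ![(0:ℝ), y] s)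
      rw [← heval, ← heval]
      exact (hrep y).symm
    rw [hcongr, intervalIntegral.integral_sub (Iaw.sub Ias) (I0w.sub I0s),
      intervalIntegral.integral_sub Iaw Ias, intervalIntegral.integral_sub I0w I0s, hE2, hE4]
    ring
  have hb3 : (b:ℝ) ^ 3 ≠ 0 := pow_ne_zero _ hb.ne'
  have hc2 : c2 = 0 := by
    have h2 : c2 * b ^ 3 = 0 := by linear_combination 3 * b * hbb - 6 * hint + 3 * b * h00
    rcases mul_eq_zero.mp h2 with h | h
    · exact h
    · exact absurd h hb3
  have hc1 : c1 = 0 := by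
    have h1 : c1 * b = 0 := by linear_combination hbb - h00 - b ^ 2 * hc2
    rcases mul_eq_zero.mp h1 with h | h
    · exact h
    · exact absurd h hb.ne'
  intro y _
  have := hrep y
  rw [h00, hc1, hc2] at this
  nlinarith [this]
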